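/- Let X = (x_1,...,x_m) and Y = (y_1,...,y_m) be two m×m frequency matrices (columns are probability distributions over positions) such that the positionwise distance d_pos(X,Y) is achieved by the identity matching of columns, i.e., d_pos(X,Y) = Σ_{i=1}^m emd(x_i, y_i). Then for every α ∈ [0,1], d_pos(X,Y) = d_pos(X, αX + (1−α)Y) + d_pos(αX + (1−α)Y, Y). -/

import Mathlib

open Finset

noncomputable section
open scoped Classical

def IsPlan {n : ℕ} (x y : Fin n → ℝ) (f : Fin n → Fin n → ℝ) : Prop :=
  (∀ i j, 0 ≤ f i j) ∧ (∀ i, ∑ j, f i j = x i) ∧ (∀ j, ∑ i, f i j = y j)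

def planCost {n : ℕ} (f : Fin n → Fin n → ℝ) : ℝ :=
  ∑ i, ∑ j, f i j * |((i : ℕ) : ℝ) - ((j : ℕ) : ℝ)|

/-- Earth mover's distance between vectors. -/
def emd {n : ℕ} (x y : Fin n → ℝ) : ℝ :=
  sInf {c | ∃ f, IsPlan x y f ∧ planCost f = c}

/-- Positionwise distance between m×m matrices given by their columns:
minimum over bijections of columns of the sum of EMDs of matched columns. -/
def dpos {m : ℕ} (X Y : Fin m → Fin m → ℝ) : ℝ :=
  ⨅ δ : Equiv.Perm (Fin m), ∑ i, emd (X i) (Y (δ i))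

/-! ### Auxiliary lemmas -/

lemma prod_isPlan {n : ℕ} (x y : Fin n → ℝ) (hx : ∀ i, 0 ≤ x i) (hy : ∀ j, 0 ≤ y j)
    (hxs : ∑ i, x i = 1) (hys : ∑ j, y j = 1) :
    IsPlan x y (fun i j => x i * y j) := by
  refine ⟨fun i j => mul_nonneg (hx i) (hy j), fun i => ?_, fun j => ?_⟩
  · rw [← Finset.mul_sum, hys, mul_one]
  · rw [← Finset.sum_mul, hxs, one_mul]

lemma planSet_nonempty {n : ℕ} {x y : Fin n → ℝ} (h : ∃ f, IsPlan x y f) :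
    {c | ∃ f, IsPlan x y f ∧ planCost f = c}.Nonempty :=
  let ⟨f, hf⟩ := h; ⟨planCost f, f, hf, rfl⟩

lemma planSet_bdd {n : ℕ} (x y : Fin n → ℝ) :
    BddBelow {c | ∃ f, IsPlan x y f ∧ planCost f = c} := by
  refine ⟨0, fun c hc => ?_⟩
  obtain ⟨f, hf, rfl⟩ := hc
  exact Finset.sum_nonneg fun i _ => Finset.sum_nonneg fun j _ =>
    mul_nonneg (hf.1 i j) (abs_nonneg _)

lemma emd_le_planCost {n : ℕ} {x y : Fin n → ℝ} {f : Fin n → Fin n → ℝ}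
    (hf : IsPlan x y f) : emd x y ≤ planCost f :=
  csInf_le (planSet_bdd x y) ⟨f, hf, rfl⟩

lemma glue_plan {n : ℕ} {x z y : Fin n → ℝ} {f g : Fin n → Fin n → ℝ}
    (hf : IsPlan x z f) (hg : IsPlan z y g) :
    ∃ h, IsPlan x y h ∧ planCost h ≤ planCost f + planCost g := by
  obtain ⟨hf0, hfr, hfc⟩ := hf
  obtain ⟨hg0, hgr, hgc⟩ := hg
  have hz0 : ∀ k, 0 ≤ z k := fun k => by
    rw [← hfc k]; exact Finset.sum_nonneg fun i _ => hf0 i k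
  have hfz : ∀ i k, z k = 0 → f i k = 0 := by
    intro i k hk
    refine le_antisymm ?_ (hf0 i k)
    rw [← hk, ← hfc k]
    exact Finset.single_le_sum (fun j _ => hf0 j k) (Finset.mem_univ i)
  have hgz : ∀ k j, z k = 0 → g k j = 0 := by
    intro k j hk
    refine le_antisymm ?_ (hg0 k j)
    rw [← hk, ← hgr k]
    exact Finset.single_le_sum (fun j' _ => hg0 k j') (Finset.mem_univ j)
  set t : Fin n → Fin n → Fin n → ℝ :=
    fun i j k => if z k = 0 then 0 else f i k * g k j / z k with ht
  have ht0 : ∀ i j k, 0 ≤ t i j k := by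
    intro i j k
    dsimp only [t]
    split
    · exact le_refl 0
    · exact div_nonneg (mul_nonneg (hf0 i k) (hg0 k j)) (hz0 k)
  have hrow : ∀ i k, ∑ j, t i j k = f i k := by
    intro i k
    by_cases hk : z k = 0
    · simp [t, hk, hfz i k hk]
    · simp only [t, if_neg hk]
      rw [← Finset.sum_div, ← Finset.mul_sum, hgr k, mul_div_assoc, div_self hk, mul_one]
  have hcol : ∀ j k, ∑ i, t i j k = g k j := by
    intro j k
    by_cases hk : z k = 0
    · simp [t, hk, hgz k j hk]
    · simp only [t, if_neg hk]
      rw [← Finset.sum_div, ← Finset.sum_mul, hfc k, mul_comm, mul_div_assoc, div_self hk,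
        mul_one]
  refine ⟨fun i j => ∑ k, t i j k, ⟨fun i j => Finset.sum_nonneg fun k _ => ht0 i j k,
    fun i => ?_, fun j => ?_⟩, ?_⟩
  · rw [Finset.sum_comm]
    simp_rw [hrow]
    exact hfr i
  · rw [Finset.sum_comm]
    simp_rw [hcol]
    exact hgc j
  · have e1 : ∑ i, ∑ j, ∑ k, t i j k * |((i : ℕ) : ℝ) - ((k : ℕ) : ℝ)| = planCost f := by
      have h1 : ∀ i : Fin n, ∑ j, ∑ k, t i j k * |((i : ℕ) : ℝ) - ((k : ℕ) : ℝ)|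
          = ∑ k, f i k * |((i : ℕ) : ℝ) - ((k : ℕ) : ℝ)| := by
        intro i
        rw [Finset.sum_comm]
        exact Finset.sum_congr rfl fun k _ => by rw [← Finset.sum_mul, hrow]
      simp_rw [h1]
      rfl
    have e2 : ∑ i, ∑ j, ∑ k, t i j k * |((k : ℕ) : ℝ) - ((j : ℕ) : ℝ)| = planCost g := by
      rw [Finset.sum_comm]
      have h2 : ∀ j : Fin n, ∑ i, ∑ k, t i j k * |((k : ℕ) : ℝ) - ((j : ℕ) : ℝ)|
          = ∑ k, g k j * |((k : ℕ) : ℝ) - ((j : ℕ) : ℝ)| := by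
        intro j
        rw [Finset.sum_comm]
        exact Finset.sum_congr rfl fun k _ => by rw [← Finset.sum_mul, hcol]
      simp_rw [h2]
      rw [Finset.sum_comm]
      rfl
    calc planCost (fun i j => ∑ k, t i j k)
        = ∑ i, ∑ j, ∑ k, t i j k * |((i : ℕ) : ℝ) - ((j : ℕ) : ℝ)| := by
          simp only [planCost]
          exact Finset.sum_congr rfl fun i _ => Finset.sum_congr rfl fun j _ =>
            Finset.sum_mul ..
      _ ≤ ∑ i, ∑ j, ∑ k, t i j k *
            (|((i : ℕ) : ℝ) - ((k : ℕ) : ℝ)| + |((k : ℕ) : ℝ) - ((j : ℕ) : ℝ)|) := by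
          refine Finset.sum_le_sum fun i _ => Finset.sum_le_sum fun j _ =>
            Finset.sum_le_sum fun k _ => mul_le_mul_of_nonneg_left ?_ (ht0 i j k)
          exact abs_sub_le _ _ _
      _ = (∑ i, ∑ j, ∑ k, t i j k * |((i : ℕ) : ℝ) - ((k : ℕ) : ℝ)|)
          + ∑ i, ∑ j, ∑ k, t i j k * |((k : ℕ) : ℝ) - ((j : ℕ) : ℝ)| := by
          simp_rw [mul_add, Finset.sum_add_distrib]
      _ = planCost f + planCost g := by rw [e1, e2]

lemma emd_triangle {n : ℕ} (x z y : Fin n → ℝ)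
    (hxz : ∃ f, IsPlan x z f) (hzy : ∃ g, IsPlan z y g) :
    emd x y ≤ emd x z + emd z y := by
  refine le_of_forall_pos_le_add fun ε hε => ?_
  obtain ⟨c1, hc1, h1⟩ := Real.lt_sInf_add_pos (planSet_nonempty hxz) (half_pos hε)
  obtain ⟨f, hf, rfl⟩ := hc1
  obtain ⟨c2, hc2, h2⟩ := Real.lt_sInf_add_pos (planSet_nonempty hzy) (half_pos hε)
  obtain ⟨g, hg, rfl⟩ := hc2
  obtain ⟨h, hh, hcost⟩ := glue_plan hf hg
  calc emd x y ≤ planCost h := emd_le_planCost hh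
    _ ≤ planCost f + planCost g := hcost
    _ ≤ (emd x z + ε / 2) + (emd z y + ε / 2) := add_le_add h1.le h2.le
    _ = emd x z + emd z y + ε := by ring

lemma emd_split {n : ℕ} (x y : Fin n → ℝ) (hx : ∀ i, 0 ≤ x i) (hy : ∀ i, 0 ≤ y i)
    (hplan : ∃ f, IsPlan x y f) (α : ℝ) (h0 : 0 ≤ α) (h1 : α ≤ 1) :
    emd x (fun i => α * x i + (1 - α) * y i)
      + emd (fun i => α * x i + (1 - α) * y i) y ≤ emd x y := by
  refine le_csInf (planSet_nonempty hplan) ?_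
  rintro c ⟨f, hf, rfl⟩
  obtain ⟨hf0, hfr, hfc⟩ := hf
  have h1' : 0 ≤ 1 - α := by linarith
  -- plan from x to the mixture
  have hg1 : IsPlan x (fun i => α * x i + (1 - α) * y i)
      (fun i j => α * (if i = j then x i else 0) + (1 - α) * f i j) := by
    refine ⟨fun i j => ?_, fun i => ?_, fun j => ?_⟩
    · refine add_nonneg (mul_nonneg h0 ?_) (mul_nonneg h1' (hf0 i j))
      split
      · exact hx i
      · exact le_refl 0
    · rw [Finset.sum_add_distrib, ← Finset.mul_sum, ← Finset.mul_sum, hfr i]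
      simp
      ring
    · rw [Finset.sum_add_distrib, ← Finset.mul_sum, ← Finset.mul_sum, hfc j]
      have : ∑ i, (if i = j then x i else 0) = x j := by simp
      rw [this]
  -- plan from the mixture to y
  have hg2 : IsPlan (fun i => α * x i + (1 - α) * y i) y
      (fun i j => α * f i j + (1 - α) * (if i = j then y i else 0)) := by
    refine ⟨fun i j => ?_, fun i => ?_, fun j => ?_⟩
    · refine add_nonneg (mul_nonneg h0 (hf0 i j)) (mul_nonneg h1' ?_)
      split
      · exact hy i
      · exact le_refl 0
    · rw [Finset.sum_add_distrib, ← Finset.mul_sum, ← Finset.mul_sum, hfr i]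
      have : ∑ j, (if i = j then y i else 0) = y i := by simp
      rw [this]
    · rw [Finset.sum_add_distrib, ← Finset.mul_sum, ← Finset.mul_sum, hfc j]
      have : ∑ i, (if i = j then y i else 0) = y j := by simp
      rw [this]
      ring
  have hdiagx : ∑ i, ∑ j, (if i = j then x i else 0) * |((i : ℕ) : ℝ) - ((j : ℕ) : ℝ)|
      = 0 := by
    refine Finset.sum_eq_zero fun i _ => Finset.sum_eq_zero fun j _ => ?_
    by_cases hij : i = j
    · subst hij; simp
    · simp [hij]
  have hdiagy : ∑ i, ∑ j, (if i = j then y i else 0) * |((i : ℕ) : ℝ) - ((j : ℕ) : ℝ)|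
      = 0 := by
    refine Finset.sum_eq_zero fun i _ => Finset.sum_eq_zero fun j _ => ?_
    by_cases hij : i = j
    · subst hij; simp
    · simp [hij]
  have hc1 : planCost (fun i j => α * (if i = j then x i else 0) + (1 - α) * f i j)
      = (1 - α) * planCost f := by
    simp only [planCost]
    simp_rw [add_mul, Finset.sum_add_distrib, mul_assoc, ← Finset.mul_sum]
    rw [hdiagx]
    ring
  have hc2 : planCost (fun i j => α * f i j + (1 - α) * (if i = j then y i else 0))
      = α * planCost f := by
    simp only [planCost]
    simp_rw [add_mul, Finset.sum_add_distrib, mul_assoc, ← Finset.mul_sum]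
    rw [hdiagy]
    ring
  calc emd x (fun i => α * x i + (1 - α) * y i)
        + emd (fun i => α * x i + (1 - α) * y i) y
      ≤ (1 - α) * planCost f + α * planCost f := by
        refine add_le_add ?_ ?_
        · rw [← hc1]; exact emd_le_planCost hg1
        · rw [← hc2]; exact emd_le_planCost hg2
    _ = planCost f := by ring

/-- If the positionwise distance between frequency matrices X and Y is achieved by
the identity matching of columns, then every convex combination αX + (1−α)Y lies
exactly between X and Y. -/
theorem stmt2 {m : ℕ} (X Y : Fin m → Fin m → ℝ)
    (hX : ∀ i j, 0 ≤ X i j) (hY : ∀ i j, 0 ≤ Y i j)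
    (hXs : ∀ i, ∑ j, X i j = 1) (hYs : ∀ i, ∑ j, Y i j = 1)
    (hid : dpos X Y = ∑ i, emd (X i) (Y i)) :
    ∀ α : ℝ, α ∈ Set.Icc (0 : ℝ) 1 →
      dpos X Y =
        dpos X (fun i j => α * X i j + (1 - α) * Y i j) +
        dpos (fun i j => α * X i j + (1 - α) * Y i j) Y := by
  rintro α ⟨h0, h1⟩
  set Z : Fin m → Fin m → ℝ := fun i j => α * X i j + (1 - α) * Y i j with hZ
  have h1' : 0 ≤ 1 - α := by linarith
  have hZ0 : ∀ i j, 0 ≤ Z i j := fun i j =>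
    add_nonneg (mul_nonneg h0 (hX i j)) (mul_nonneg h1' (hY i j))
  have hZs : ∀ i, ∑ j, Z i j = 1 := by
    intro i
    simp only [Z]
    rw [Finset.sum_add_distrib, ← Finset.mul_sum, ← Finset.mul_sum, hXs i, hYs i]
    ring
  -- plans exist between any pair of columns of X, Y, Z
  have hXZ : ∀ i k, ∃ f, IsPlan (X i) (Z k) f := fun i k =>
    ⟨_, prod_isPlan (X i) (Z k) (hX i) (hZ0 k) (hXs i) (hZs k)⟩
  have hZY : ∀ k j, ∃ f, IsPlan (Z k) (Y j) f := fun k j =>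
    ⟨_, prod_isPlan (Z k) (Y j) (hZ0 k) (hY j) (hZs k) (hYs j)⟩
  have hXY : ∀ i j, ∃ f, IsPlan (X i) (Y j) f := fun i j =>
    ⟨_, prod_isPlan (X i) (Y j) (hX i) (hY j) (hXs i) (hYs j)⟩
  -- per-column equality along the identity matching
  have hEq : ∀ i, emd (X i) (Z i) + emd (Z i) (Y i) = emd (X i) (Y i) := by
    intro i
    refine le_antisymm ?_ (emd_triangle (X i) (Z i) (Y i) (hXZ i i) (hZY i i))
    have := emd_split (X i) (Y i) (hX i) (hY i) (hXY i i) α h0 h1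
    exact this
  have hbdd : ∀ (A B : Fin m → Fin m → ℝ),
      BddBelow (Set.range fun δ : Equiv.Perm (Fin m) => ∑ i, emd (A i) (B (δ i))) :=
    fun A B => (Set.finite_range _).bddBelow
  -- upper bound: dpos X Z + dpos Z Y ≤ dpos X Y
  have hupper : dpos X Z + dpos Z Y ≤ dpos X Y := by
    have hx : dpos X Z ≤ ∑ i, emd (X i) (Z i) := by
      have := ciInf_le (hbdd X Z) (1 : Equiv.Perm (Fin m))
      simp at this; exact this
    have hy : dpos Z Y ≤ ∑ i, emd (Z i) (Y i) := by
      have := ciInf_le (hbdd Z Y) (1 : Equiv.Perm (Fin m))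
      simp at this; exact this
    calc dpos X Z + dpos Z Y ≤ (∑ i, emd (X i) (Z i)) + ∑ i, emd (Z i) (Y i) :=
          add_le_add hx hy
      _ = ∑ i, (emd (X i) (Z i) + emd (Z i) (Y i)) := (Finset.sum_add_distrib).symm
      _ = ∑ i, emd (X i) (Y i) := Finset.sum_congr rfl fun i _ => hEq i
      _ = dpos X Y := hid.symm
  -- lower bound: dpos X Y ≤ dpos X Z + dpos Z Y
  have hlower : dpos X Y ≤ dpos X Z + dpos Z Y := by
    obtain ⟨δ₀, hδ₀⟩ := Finite.exists_min
      (fun δ : Equiv.Perm (Fin m) => ∑ i, emd (X i) (Z (δ i)))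
    obtain ⟨σ₀, hσ₀⟩ := Finite.exists_min
      (fun σ : Equiv.Perm (Fin m) => ∑ i, emd (Z i) (Y (σ i)))
    have hdXZ : dpos X Z = ∑ i, emd (X i) (Z (δ₀ i)) :=
      le_antisymm (ciInf_le (hbdd X Z) δ₀) (le_ciInf hδ₀)
    have hdZY : dpos Z Y = ∑ i, emd (Z i) (Y (σ₀ i)) :=
      le_antisymm (ciInf_le (hbdd Z Y) σ₀) (le_ciInf hσ₀)
    have hre : ∑ i, emd (Z i) (Y (σ₀ i)) = ∑ i, emd (Z (δ₀ i)) (Y (σ₀ (δ₀ i))) :=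
      (Equiv.sum_comp δ₀ fun i => emd (Z i) (Y (σ₀ i))).symm
    have htri : ∑ i, emd (X i) (Y (σ₀ (δ₀ i)))
        ≤ (∑ i, emd (X i) (Z (δ₀ i))) + ∑ i, emd (Z (δ₀ i)) (Y (σ₀ (δ₀ i))) := by
      rw [← Finset.sum_add_distrib]
      exact Finset.sum_le_sum fun i _ =>
        emd_triangle (X i) (Z (δ₀ i)) (Y (σ₀ (δ₀ i))) (hXZ i (δ₀ i)) (hZY (δ₀ i) (σ₀ (δ₀ i)))
    have hd : dpos X Y ≤ ∑ i, emd (X i) (Y ((δ₀.trans σ₀) i)) :=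
      ciInf_le (hbdd X Y) (δ₀.trans σ₀)
    calc dpos X Y ≤ ∑ i, emd (X i) (Y (σ₀ (δ₀ i))) := hd
      _ ≤ (∑ i, emd (X i) (Z (δ₀ i))) + ∑ i, emd (Z (δ₀ i)) (Y (σ₀ (δ₀ i))) := htri
      _ = dpos X Z + dpos Z Y := by rw [hdXZ, hdZY, hre]
  exact le_antisymm hlower hupper

end
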